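/- Let k ≥ 1 and for 0 < δ < ∞ define T_{δ,k/2}(n) = Σ_{ℓ=0, ℓ even}^{k} a_{k,ℓ}·|n|^{ℓ}·𝔎_δ(n)^{k−ℓ} where 𝔎_δ(n) = n coth(δn) − 1/δ and a_{k,ℓ} > 0 with Σ a_{k,ℓ} = 1. Then 0 ≤ |n|^k − T_{δ,k/2}(n) ≲ δ^{−1}|n|^{k−1} for |n| > 1/δ, and 0 ≤ |n|^k − T_{δ,k/2}(n) ≲ δ^{−k} for 0 < |n| ≤ 1/δ, with implicit constants depending only on k. -/

import Mathlib

open Real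

/-- `coth x = (e^x + e^{-x})/(e^x - e^{-x}) = cosh x / sinh x` (for `x ≠ 0`). -/
noncomputable def myCoth (x : ℝ) : ℝ := Real.cosh x / Real.sinh x

/-- The ILW dispersion multiplier `𝔎_δ(n) = n · coth(δn) − 1/δ`. -/
noncomputable def Kmul (δ : ℝ) (n : ℤ) : ℝ := (n : ℝ) * myCoth (δ * n) - 1 / δ

/-- The deep-water Gaussian multiplier
`T_{δ,k/2}(n) = Σ_{ℓ even, 0 ≤ ℓ ≤ k} a_ℓ |n|^ℓ 𝔎_δ(n)^{k−ℓ}`. -/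
noncomputable def Tmul (a : ℕ → ℝ) (k : ℕ) (δ : ℝ) (n : ℤ) : ℝ :=
  ∑ ℓ ∈ Finset.range (k + 1),
    if Even ℓ then a ℓ * |(n : ℝ)| ^ ℓ * Kmul δ n ^ (k - ℓ) else 0

lemma auxB {x : ℝ} (hx : 0 < x) : Real.sinh x < x * Real.cosh x := by
  have h : StrictMonoOn (fun y : ℝ => y * Real.cosh y - Real.sinh y) (Set.Ici 0) := by
    apply strictMonoOn_of_deriv_pos (convex_Ici 0)
    · fun_prop
    · intro y hy
      rw [interior_Ici] at hy
      have hd : HasDerivAt (fun y : ℝ => y * Real.cosh y - Real.sinh y)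
          (1 * Real.cosh y + y * Real.sinh y - Real.cosh y) y :=
        ((hasDerivAt_id y).mul (Real.hasDerivAt_cosh y)).sub (Real.hasDerivAt_sinh y)
      rw [hd.deriv]
      have hy2 : (0:ℝ) < y := hy
      have hs : 0 < Real.sinh y := Real.sinh_pos_iff.mpr hy2
      nlinarith [mul_pos hy2 hs]
  have := h Set.self_mem_Ici (Set.mem_Ici.mpr hx.le) hx
  simpa using this

lemma auxC {x : ℝ} (hx : 0 < x) : x * Real.cosh x - Real.sinh x < x * Real.sinh x := by
  have h2 : 2 * x + 1 < Real.exp (2 * x) := Real.add_one_lt_exp (by positivity)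
  have he : Real.exp (2 * x) = Real.exp x * Real.exp x := by
    rw [← Real.exp_add]; ring_nf
  have hne : Real.exp (-x) * Real.exp x = 1 := by
    rw [← Real.exp_add]; simp
  have hp := Real.exp_pos x
  have hp' := Real.exp_pos (-x)
  rw [Real.cosh_eq, Real.sinh_eq]
  nlinarith [mul_pos hp hp']

lemma kmul_bounds_pos {δ : ℝ} (hδ : 0 < δ) {n : ℤ} (hn : 0 < n) :
    0 < Kmul δ n ∧ Kmul δ n < (n : ℝ) ∧ (n : ℝ) - 1 / δ < Kmul δ n := by
  set N : ℝ := (n : ℝ) with hNdef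
  have hN : 0 < N := by rw [hNdef]; exact_mod_cast hn
  set x : ℝ := δ * N with hxdef
  have hx : 0 < x := mul_pos hδ hN
  have hs : 0 < Real.sinh x := Real.sinh_pos_iff.mpr hx
  have hrw : Kmul δ n = (x * Real.cosh x - Real.sinh x) / (δ * Real.sinh x) := by
    rw [Kmul, myCoth]
    field_simp
    simp only [hxdef, hNdef]
    ring_nf
  have hds : 0 < δ * Real.sinh x := mul_pos hδ hs
  refine ⟨?_, ?_, ?_⟩
  · rw [hrw]
    exact div_pos (by linarith [auxB hx]) hds
  · rw [hrw, div_lt_iff₀ hds]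
    have := auxC hx
    calc x * Real.cosh x - Real.sinh x < x * Real.sinh x := this
      _ = N * (δ * Real.sinh x) := by rw [hxdef]; ring
  · rw [hrw, lt_div_iff₀ hds]
    have hcs : Real.sinh x < Real.cosh x := Real.sinh_lt_cosh x
    have : (N - 1/δ) * (δ * Real.sinh x) = x * Real.sinh x - Real.sinh x := by
      rw [hxdef]; field_simp
    rw [this]
    nlinarith [mul_lt_mul_of_pos_left hcs hx]

lemma kmul_bounds {δ : ℝ} (hδ : 0 < δ) {n : ℤ} (hn : n ≠ 0) :
    0 < Kmul δ n ∧ Kmul δ n < |(n : ℝ)| ∧ |(n : ℝ)| - 1 / δ < Kmul δ n := by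
  rcases lt_or_gt_of_ne hn with h | h
  · have hneg : Kmul δ n = Kmul δ (-n) := by
      rw [Kmul, Kmul, myCoth, myCoth]
      push_cast
      rw [mul_neg, Real.sinh_neg, Real.cosh_neg]
      field_simp
    have habs : |(n : ℝ)| = ((-n : ℤ) : ℝ) := by
      push_cast
      rw [abs_of_neg (by exact_mod_cast h)]
    rw [hneg, habs]
    exact kmul_bounds_pos hδ (by omega)
  · have habs : |(n : ℝ)| = (n : ℝ) := abs_of_pos (by exact_mod_cast h)
    rw [habs]
    exact kmul_bounds_pos hδ h

lemma aux_pow {a b : ℝ} (hb : 0 ≤ b) (hba : b ≤ a) :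
    ∀ m : ℕ, a ^ (m + 1) - b ^ (m + 1) ≤ ((m : ℝ) + 1) * a ^ m * (a - b)
  | 0 => by simp
  | (m + 1) => by
    have ih := aux_pow hb hba m
    have h1 : b ^ (m + 1) ≤ a ^ (m + 1) := pow_le_pow_left₀ hb hba _
    have ha : 0 ≤ a := hb.trans hba
    have h3 : 0 ≤ a ^ m := pow_nonneg ha m
    have e1 : a ^ (m + 1 + 1) = a ^ (m + 1) * a := pow_succ a (m + 1)
    have e2 : b ^ (m + 1 + 1) = b ^ (m + 1) * b := pow_succ b (m + 1)
    have e3 : a ^ (m + 1) = a ^ m * a := pow_succ a m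
    push_cast
    calc a ^ (m + 1 + 1) - b ^ (m + 1 + 1)
        = a * (a ^ (m + 1) - b ^ (m + 1)) + b ^ (m + 1) * (a - b) := by
          rw [e1, e2]; ring
      _ ≤ a * (((m : ℝ) + 1) * a ^ m * (a - b)) + a ^ (m + 1) * (a - b) :=
          add_le_add (mul_le_mul_of_nonneg_left ih ha)
            (mul_le_mul_of_nonneg_right h1 (sub_nonneg.mpr hba))
      _ = ((m : ℝ) + 1 + 1) * a ^ (m + 1) * (a - b) := by rw [e3]; ring

theorem stmt14 (k : ℕ) (hk : 1 ≤ k) :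
    ∃ C : ℝ, 0 < C ∧ ∀ a : ℕ → ℝ,
      (∀ ℓ, ℓ ≤ k → Even ℓ → 0 < a ℓ) →
      (∑ ℓ ∈ Finset.range (k + 1), if Even ℓ then a ℓ else 0) = 1 →
      ∀ δ : ℝ, 0 < δ → ∀ n : ℤ, n ≠ 0 →
        0 ≤ |(n : ℝ)| ^ k - Tmul a k δ n ∧
        (1 / δ < |(n : ℝ)| →
          |(n : ℝ)| ^ k - Tmul a k δ n ≤ C * δ⁻¹ * |(n : ℝ)| ^ (k - 1)) ∧
        (|(n : ℝ)| ≤ 1 / δ →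
          |(n : ℝ)| ^ k - Tmul a k δ n ≤ C * δ⁻¹ ^ k) := by
  refine ⟨k, by exact_mod_cast hk, ?_⟩
  intro a hapos hasum δ hδ n hn
  set N : ℝ := |(n : ℝ)| with hNdef
  have hN1 : 1 ≤ N := by
    rw [hNdef, ← Int.cast_abs]
    exact_mod_cast Int.one_le_abs hn
  have hN : 0 < N := lt_of_lt_of_le one_pos hN1
  obtain ⟨hK0, hKN, hKlo⟩ := kmul_bounds hδ hn
  set K : ℝ := Kmul δ n with hKdef
  set D : ℝ := N - K with hDdef
  have hD0 : 0 ≤ D := by simp [hDdef]; linarith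
  have hDδ : D ≤ 1 / δ := by simp only [hDdef]; linarith
  -- rewrite the difference as a sum
  have key : N ^ k - Tmul a k δ n =
      ∑ ℓ ∈ Finset.range (k + 1),
        (if Even ℓ then a ℓ * (N ^ ℓ * (N ^ (k - ℓ) - K ^ (k - ℓ))) else 0) := by
    have h1 : N ^ k = ∑ ℓ ∈ Finset.range (k + 1),
        (if Even ℓ then a ℓ * N ^ k else 0) := by
      rw [show (∑ ℓ ∈ Finset.range (k + 1), (if Even ℓ then a ℓ * N ^ k else 0))
          = (∑ ℓ ∈ Finset.range (k + 1), if Even ℓ then a ℓ else 0) * N ^ k from by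
        rw [Finset.sum_mul]; exact Finset.sum_congr rfl fun ℓ _ => by split <;> simp]
      rw [hasum, one_mul]
    rw [h1, Tmul, ← Finset.sum_sub_distrib]
    refine Finset.sum_congr rfl fun ℓ hℓ => ?_
    have hℓk : ℓ ≤ k := Nat.lt_succ_iff.mp (Finset.mem_range.mp hℓ)
    have hpow : N ^ k = N ^ ℓ * N ^ (k - ℓ) := by
      rw [← pow_add, Nat.add_sub_cancel' hℓk]
    split
    · rw [hpow]; ring
    · ring
  -- termwise nonneg
  have hterm_nonneg : ∀ ℓ ∈ Finset.range (k + 1),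
      0 ≤ (if Even ℓ then a ℓ * (N ^ ℓ * (N ^ (k - ℓ) - K ^ (k - ℓ))) else 0) := by
    intro ℓ hℓ
    have hℓk : ℓ ≤ k := Nat.lt_succ_iff.mp (Finset.mem_range.mp hℓ)
    split
    case isTrue he =>
      have := hapos ℓ hℓk he
      have hKp : K ^ (k - ℓ) ≤ N ^ (k - ℓ) := pow_le_pow_left₀ hK0.le hKN.le _
      have : 0 ≤ N ^ (k - ℓ) - K ^ (k - ℓ) := by linarith
      positivity
    case isFalse => exact le_refl 0
  -- termwise upper bound
  have hterm_ub : ∀ ℓ ∈ Finset.range (k + 1),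
      (if Even ℓ then a ℓ * (N ^ ℓ * (N ^ (k - ℓ) - K ^ (k - ℓ))) else 0)
        ≤ (if Even ℓ then a ℓ * ((k : ℝ) * N ^ (k - 1) * D) else 0) := by
    intro ℓ hℓ
    have hℓk : ℓ ≤ k := Nat.lt_succ_iff.mp (Finset.mem_range.mp hℓ)
    split
    case isFalse => exact le_refl 0
    case isTrue he =>
      have hapos' := hapos ℓ hℓk he
      refine mul_le_mul_of_nonneg_left ?_ hapos'.le
      rcases eq_or_lt_of_le hℓk with rfl | hlt
      · simp only [Nat.sub_self, pow_zero, sub_self, mul_zero]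
        have : 0 ≤ N ^ (ℓ - 1) := by positivity
        positivity
      · -- ℓ < k, so k - ℓ = (k - ℓ - 1) + 1
        set m : ℕ := k - ℓ - 1 with hm
        have hkl : k - ℓ = m + 1 := by omega
        have hbound := aux_pow hK0.le hKN.le m
        have hle : N ^ ℓ * (N ^ (k - ℓ) - K ^ (k - ℓ))
            ≤ N ^ ℓ * (((m : ℝ) + 1) * N ^ m * D) := by
          rw [hkl]
          exact mul_le_mul_of_nonneg_left hbound (by positivity)
        refine hle.trans ?_
        have hpow : N ^ ℓ * N ^ m = N ^ (k - 1) := by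
          rw [← pow_add]; congr 1; omega
        have hm1 : (m : ℝ) + 1 ≤ (k : ℝ) := by
          have : m + 1 ≤ k := by omega
          exact_mod_cast this
        calc N ^ ℓ * (((m : ℝ) + 1) * N ^ m * D)
            = ((m : ℝ) + 1) * (N ^ ℓ * N ^ m) * D := by ring
          _ = ((m : ℝ) + 1) * N ^ (k - 1) * D := by rw [hpow]
          _ ≤ (k : ℝ) * N ^ (k - 1) * D := by
              have hnn : (0:ℝ) ≤ N ^ (k - 1) := by positivity
              exact mul_le_mul_of_nonneg_right
                (mul_le_mul_of_nonneg_right hm1 hnn) hD0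
  -- global sum bound
  have hsum_ub : N ^ k - Tmul a k δ n ≤ (k : ℝ) * N ^ (k - 1) * D := by
    rw [key]
    calc ∑ ℓ ∈ Finset.range (k + 1),
          (if Even ℓ then a ℓ * (N ^ ℓ * (N ^ (k - ℓ) - K ^ (k - ℓ))) else 0)
        ≤ ∑ ℓ ∈ Finset.range (k + 1),
          (if Even ℓ then a ℓ * ((k : ℝ) * N ^ (k - 1) * D) else 0) :=
          Finset.sum_le_sum hterm_ub
      _ = (∑ ℓ ∈ Finset.range (k + 1), if Even ℓ then a ℓ else 0)
          * ((k : ℝ) * N ^ (k - 1) * D) := by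
          rw [Finset.sum_mul]; exact Finset.sum_congr rfl fun ℓ _ => by split <;> simp
      _ = (k : ℝ) * N ^ (k - 1) * D := by rw [hasum, one_mul]
  have hk0 : (0 : ℝ) < (k : ℝ) := by exact_mod_cast hk
  refine ⟨?_, ?_, ?_⟩
  · rw [key]; exact Finset.sum_nonneg hterm_nonneg
  · intro _
    refine hsum_ub.trans ?_
    rw [one_div] at hDδ
    calc (k : ℝ) * N ^ (k - 1) * D ≤ (k : ℝ) * N ^ (k - 1) * δ⁻¹ := by
          refine mul_le_mul_of_nonneg_left hDδ (by positivity)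
      _ = (k : ℝ) * δ⁻¹ * N ^ (k - 1) := by ring
  · intro hNδ
    refine hsum_ub.trans ?_
    rw [one_div] at hDδ hNδ
    have hNpow : N ^ (k - 1) ≤ δ⁻¹ ^ (k - 1) := pow_le_pow_left₀ hN.le hNδ _
    have hδinv : (0 : ℝ) < δ⁻¹ := by positivity
    calc (k : ℝ) * N ^ (k - 1) * D ≤ (k : ℝ) * δ⁻¹ ^ (k - 1) * δ⁻¹ := by
          have h1 : N ^ (k - 1) * D ≤ δ⁻¹ ^ (k - 1) * δ⁻¹ := by
            refine mul_le_mul hNpow hDδ hD0 (by positivity)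
          nlinarith
      _ = (k : ℝ) * δ⁻¹ ^ k := by
          rw [mul_assoc, ← pow_succ]
          congr 2
          omega
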